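/- Assume φ ∈ (0,1), ω > 0, μ > 0, b > 0 and r := bφ − μ(1−φ) > 0; set ρ* := (1 − e^{μ(1−φ)ω − bφω})/(1 − e^{−bφω}). Let A = (a_{ij}) be a real 3×3 matrix, let x ∈ ℝ³, and suppose u : ℝ → ℝ³ satisfies the Lotka–Volterra competition system at every t ∈ [0, (r/b)ω] with u(0) = x/ρ* (componentwise). Then there exists a continuous v : [0, ω] → ℝ³ with v(0) = x, such that each component of v has derivative −μ·v_i(t) at every t ∈ (0, (1−φ)ω), v satisfies the Lotka–Volterra competition system at every t ∈ ((1−φ)ω, ω), and v(ω) = ρ*·u((r/b)ω). (That is, the Poincaré map of the Lotka–Volterra system with seasonal succession satisfies P(x) = ρ*·Φ((r/b)ω, x/ρ*), where Φ is the flow of the autonomous system.) -/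

import Mathlib

/-- Factorization of the Poincaré map of the seasonal Lotka–Volterra system:
`P x = ρ* • Φ((r/b)ω, x/ρ*)`. If `u` solves the Lotka–Volterra system on `[0, (r/b)ω]`
with `u 0 = x/ρ*`, then there is a continuous `v` on `[0, ω]` with `v 0 = x`, solving the
death phase `vᵢ' = -μ vᵢ` on `(0, (1-φ)ω)` and the Lotka–Volterra phase on `((1-φ)ω, ω)`,
such that `v ω = ρ* • u((r/b)ω)`. -/
theorem stmt_7 (φ ω μ b r ρs : ℝ)
    (hφ0 : 0 < φ) (hφ1 : φ < 1) (hω : 0 < ω) (hμ : 0 < μ) (hb : 0 < b)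
    (hr : r = b * φ - μ * (1 - φ)) (hrpos : 0 < r)
    (hρs : ρs = (1 - Real.exp (μ * (1 - φ) * ω - b * φ * ω)) /
      (1 - Real.exp (-(b * φ * ω))))
    (A : Matrix (Fin 3) (Fin 3) ℝ) (x : Fin 3 → ℝ) (u : ℝ → Fin 3 → ℝ)
    (hu : ∀ t ∈ Set.Icc (0 : ℝ) (r / b * ω), ∀ i : Fin 3,
      HasDerivAt (fun s => u s i) (u t i * (b - ∑ j : Fin 3, A i j * u t j)) t)
    (hu0 : ∀ i : Fin 3, u 0 i = x i / ρs) :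
    ∃ v : ℝ → Fin 3 → ℝ,
      ContinuousOn v (Set.Icc 0 ω) ∧
      (∀ i : Fin 3, v 0 i = x i) ∧
      (∀ t ∈ Set.Ioo (0 : ℝ) ((1 - φ) * ω), ∀ i : Fin 3,
        HasDerivAt (fun s => v s i) (-μ * v t i) t) ∧
      (∀ t ∈ Set.Ioo ((1 - φ) * ω) ω, ∀ i : Fin 3,
        HasDerivAt (fun s => v s i) (v t i * (b - ∑ j : Fin 3, A i j * v t j)) t) ∧
      (∀ i : Fin 3, v ω i = ρs * u (r / b * ω) i) := by
  set t0 : ℝ := (1 - φ) * ω with ht0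
  set T : ℝ := r / b * ω with hT
  set E1 : ℝ := Real.exp (-(μ * (1 - φ) * ω)) with hE1
  set E2 : ℝ := Real.exp (-(b * φ * ω)) with hE2
  have h1φ : 0 < 1 - φ := by linarith
  have ht0pos : 0 < t0 := mul_pos h1φ hω
  have ht0ω : t0 < ω := by rw [ht0]; nlinarith
  have hTpos : 0 < T := mul_pos (div_pos hrpos hb) hω
  have hE2pos : 0 < E2 := Real.exp_pos _
  have hE1lt1 : E1 < 1 := by
    calc E1 < Real.exp 0 := Real.exp_lt_exp.mpr (by nlinarith)
      _ = 1 := Real.exp_zero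
  have hE2E1 : E2 < E1 := by
    rw [hE1, hE2]
    apply Real.exp_lt_exp.mpr
    nlinarith
  set K : ℝ := (1 - E1) / (E1 - E2) with hK
  have hE1E2 : 0 < E1 - E2 := by linarith
  have h1E2 : 0 < 1 - E2 := by linarith
  have h1E1 : 0 < 1 - E1 := by linarith
  have hKpos : 0 < K := div_pos h1E1 hE1E2
  have hE1pos : 0 < E1 := lt_trans hE2pos hE2E1
  have h1K : 0 < 1 + K := by linarith
  have hEdiv : Real.exp (μ * (1 - φ) * ω - b * φ * ω) = E2 / E1 := by
    rw [hE1, hE2, ← Real.exp_sub]; congr 1; ring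
  have hρ : ρs = (E1 - E2) / (E1 * (1 - E2)) := by
    rw [hρs, hEdiv]
    field_simp
  have hρpos : 0 < ρs := by
    rw [hρ]; exact div_pos hE1E2 (mul_pos hE1pos h1E2)
  set c : ℝ → ℝ := fun t => Real.exp (b * (t - t0)) / (Real.exp (b * (t - t0)) + K) with hc
  set ss : ℝ → ℝ := fun t => (1 / b) * Real.log ((Real.exp (b * (t - t0)) + K) / (1 + K)) with hss
  set pj : ℝ → ℝ := fun σ => max 0 (min T σ) with hpj
  set uu : ℝ → Fin 3 → ℝ := fun σ => u (pj σ) with huu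
  have hden : ∀ t : ℝ, 0 < Real.exp (b * (t - t0)) + K := fun t => by positivity
  have hst0 : ss t0 = 0 := by
    simp [hss, div_self h1K.ne']
  have hexpω : Real.exp (b * (ω - t0)) = E2⁻¹ := by
    rw [hE2, ← Real.exp_neg]; congr 1; rw [ht0]; ring
  have hbT : b * T = b * φ * ω - μ * (1 - φ) * ω := by
    rw [hT, hr]; field_simp
  have hexpT : Real.exp (b * T) = E1 / E2 := by
    rw [hE1, hE2, ← Real.exp_sub, hbT]; congr 1; ring
  have hcω : c ω = ρs := by
    show Real.exp (b * (ω - t0)) / (Real.exp (b * (ω - t0)) + K) = ρs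
    rw [hexpω, hρ, hK, div_eq_div_iff (by positivity) (by positivity)]
    field_simp
    ring
  have hargω : (Real.exp (b * (ω - t0)) + K) / (1 + K) = Real.exp (b * T) := by
    rw [hexpω, hexpT, hK]
    field_simp
    ring
  have hsω : ss ω = T := by
    show (1 / b) * Real.log ((Real.exp (b * (ω - t0)) + K) / (1 + K)) = T
    rw [hargω, Real.log_exp]
    field_simp
  -- derivatives
  have hEder : ∀ t : ℝ, HasDerivAt (fun t => Real.exp (b * (t - t0)))
      (b * Real.exp (b * (t - t0))) t := by
    intro t
    have h1 : HasDerivAt (fun t : ℝ => b * (t - t0)) b t := by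
      simpa using ((hasDerivAt_id t).sub_const t0).const_mul b
    simpa [mul_comm] using h1.exp
  have hcder : ∀ t : ℝ, HasDerivAt c (b * c t * (1 - c t)) t := by
    intro t
    have h := (hEder t).div ((hEder t).add_const K) (hden t).ne'
    convert h using 1
    · rfl
    · rfl
    · rfl
    simp only [hc]
    field_simp
  have hsder : ∀ t : ℝ, HasDerivAt ss (c t) t := by
    intro t
    have harg : HasDerivAt (fun t => (Real.exp (b * (t - t0)) + K) / (1 + K))
        (b * Real.exp (b * (t - t0)) / (1 + K)) t := ((hEder t).add_const K).div_const (1 + K)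
    have hargpos : (Real.exp (b * (t - t0)) + K) / (1 + K) ≠ 0 := by positivity
    have hlog := harg.log hargpos
    have h2 := hlog.const_mul (1 / b)
    convert h2 using 1
    · rfl
    · rfl
    simp only [hc]
    rw [div_div_div_cancel_right₀]
    · field_simp
    · exact h1K.ne'
  have hsmem : ∀ t ∈ Set.Ioo t0 ω, ss t ∈ Set.Ioo 0 T := by
    intro t ht
    have hE1t : 1 < Real.exp (b * (t - t0)) := by
      calc (1:ℝ) = Real.exp 0 := Real.exp_zero.symm
        _ < _ := Real.exp_lt_exp.mpr (mul_pos hb (by linarith [ht.1]))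
    have harg1 : 1 < (Real.exp (b * (t - t0)) + K) / (1 + K) := by
      rw [lt_div_iff₀ h1K]; linarith
    constructor
    · have hl := Real.log_pos harg1
      have hb' : (0:ℝ) < 1 / b := by positivity
      show 0 < (1 / b) * Real.log ((Real.exp (b * (t - t0)) + K) / (1 + K))
      exact mul_pos hb' hl
    · show (1 / b) * Real.log ((Real.exp (b * (t - t0)) + K) / (1 + K)) < T
      have hEt : Real.exp (b * (t - t0)) < Real.exp (b * (ω - t0)) :=
        Real.exp_lt_exp.mpr (mul_lt_mul_of_pos_left (by linarith [ht.2]) hb)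
      have hlt : (Real.exp (b * (t - t0)) + K) / (1 + K) < Real.exp (b * T) := by
        rw [← hargω]
        exact div_lt_div_of_pos_right (by linarith) h1K
      have hlog := Real.log_lt_log (by positivity) hlt
      rw [Real.log_exp] at hlog
      calc (1 / b) * Real.log ((Real.exp (b * (t - t0)) + K) / (1 + K))
          < (1 / b) * (b * T) := by
            exact mul_lt_mul_of_pos_left hlog (by positivity)
        _ = T := by field_simp
  have hpjeq : ∀ σ' : ℝ, 0 ≤ σ' → σ' ≤ T → pj σ' = σ' := by
    intro σ' h0 hT'
    simp [hpj, min_eq_right hT', max_eq_right h0]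
  -- the solution of the seasonal system
  set v : ℝ → Fin 3 → ℝ :=
    fun t i => if t ≤ t0 then Real.exp (-μ * t) * x i else c t * uu (ss t) i with hv
  have hucont : ContinuousOn u (Set.Icc 0 T) := by
    intro σ hσ
    apply ContinuousAt.continuousWithinAt
    apply continuousAt_pi.mpr
    intro i
    exact (hu σ hσ i).continuousAt
  have hpjmem : ∀ σ : ℝ, pj σ ∈ Set.Icc 0 T :=
    fun σ => ⟨le_max_left _ _, max_le hTpos.le (min_le_left _ _)⟩
  have hpjcont : Continuous pj := continuous_const.max (continuous_const.min continuous_id)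
  have huucont : Continuous uu := hucont.comp_continuous hpjcont hpjmem
  have hexpcont : Continuous fun t : ℝ => Real.exp (b * (t - t0)) :=
    Real.continuous_exp.comp (continuous_const.mul (continuous_id.sub continuous_const))
  have hsscont : Continuous ss := by
    rw [hss]
    exact continuous_const.mul (((hexpcont.add continuous_const).div_const (1 + K)).log
      (fun t => (div_pos (hden t) h1K).ne'))
  have hccont : Continuous c := by
    rw [hc]
    exact hexpcont.div (hexpcont.add continuous_const) (fun t => (hden t).ne')
  have hbd : ∀ i : Fin 3, Real.exp (-μ * t0) * x i = c t0 * uu (ss t0) i := by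
    intro i
    have hpj0 : pj 0 = 0 := hpjeq 0 le_rfl hTpos.le
    have hc0 : c t0 = 1 / (1 + K) := by
      show Real.exp (b * (t0 - t0)) / (Real.exp (b * (t0 - t0)) + K) = 1 / (1 + K)
      simp
    have hexp0 : Real.exp (-μ * t0) = E1 := by
      rw [hE1]; congr 1; rw [ht0]; ring
    rw [hst0, hexp0, hc0]
    show E1 * x i = 1 / (1 + K) * u (pj 0) i
    rw [hpj0, hu0 i, hρ, hK]
    field_simp
    ring
  refine ⟨v, ?_, ?_, ?_, ?_, ?_⟩
  · apply Continuous.continuousOn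
    apply continuous_pi
    intro i
    exact Continuous.if_le
      ((Real.continuous_exp.comp (continuous_const.mul continuous_id)).mul continuous_const)
      (hccont.mul ((continuous_apply i).comp (huucont.comp hsscont)))
      continuous_id continuous_const
      (fun t htt => by rw [htt]; exact hbd i)
  · intro i
    simp [hv, ht0pos.le]
  · intro t ht i
    have hvt : v t i = Real.exp (-μ * t) * x i := by
      simp [hv, ht.2.le]
    have hev : (fun t' => v t' i) =ᶠ[nhds t] fun t' => Real.exp (-μ * t') * x i := by
      filter_upwards [Iio_mem_nhds ht.2] with t' ht'
      simp [hv, (Set.mem_Iio.mp ht').le]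
    have h1 : HasDerivAt (fun t' : ℝ => -μ * t') (-μ) t := by
      simpa using (hasDerivAt_id t).const_mul (-μ)
    have hd : HasDerivAt (fun t' => Real.exp (-μ * t') * x i)
        (-μ * (Real.exp (-μ * t) * x i)) t := by
      have := h1.exp.mul_const (x i)
      convert this using 1
      · rfl
      · rfl
      ring
    rw [show -μ * v t i = -μ * (Real.exp (-μ * t) * x i) by rw [hvt]]
    exact hd.congr_of_eventuallyEq hev
  · intro t ht i
    obtain ⟨hσ0, hσT⟩ := hsmem t ht
    have hev : (fun t' => v t' i) =ᶠ[nhds t] fun t' => c t' * u (ss t') i := by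
      have h1 : {t' : ℝ | t0 < t'} ∈ nhds t := Ioi_mem_nhds ht.1
      have h2 : ss ⁻¹' Set.Ioo 0 T ∈ nhds t :=
        hsscont.continuousAt.preimage_mem_nhds (Ioo_mem_nhds hσ0 hσT)
      filter_upwards [h1, h2] with t' h1' h2'
      have : pj (ss t') = ss t' := hpjeq _ h2'.1.le h2'.2.le
      simp [hv, not_le.mpr h1', huu, this]
    have hui := hu (ss t) (Set.mem_Icc.mpr ⟨hσ0.le, hσT.le⟩) i
    have hcomp : HasDerivAt (fun t' => u (ss t') i)
        ((u (ss t) i * (b - ∑ j : Fin 3, A i j * u (ss t) j)) * c t) t := by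
      have := hui.comp t (hsder t)
      simpa [Function.comp_def] using this
    have hprod := (hcder t).mul hcomp
    have hvt : ∀ j : Fin 3, v t j = c t * u (ss t) j := by
      intro j
      have : pj (ss t) = ss t := hpjeq _ hσ0.le hσT.le
      simp [hv, not_le.mpr ht.1, huu, this]
    have hgoal : v t i * (b - ∑ j : Fin 3, A i j * v t j)
        = (b * c t * (1 - c t)) * u (ss t) i
          + c t * ((u (ss t) i * (b - ∑ j : Fin 3, A i j * u (ss t) j)) * c t) := by
      simp only [hvt]
      have hsum : ∑ j : Fin 3, A i j * (c t * u (ss t) j)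
          = c t * ∑ j : Fin 3, A i j * u (ss t) j := by
        rw [Finset.mul_sum]
        exact Finset.sum_congr rfl fun j _ => by ring
      rw [hsum]; ring
    rw [hgoal]
    exact hprod.congr_of_eventuallyEq hev
  · intro i
    have hnle : ¬ ω ≤ t0 := not_le.mpr ht0ω
    have hpjT : pj T = T := hpjeq T hTpos.le le_rfl
    show (if ω ≤ t0 then Real.exp (-μ * ω) * x i else c ω * uu (ss ω) i) = ρs * u T i
    rw [if_neg hnle, hsω, hcω]
    show ρs * u (pj T) i = ρs * u T i
    rw [hpjT]
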